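/- Under the stated hypotheses, suppose in addition that I + R_x is invertible for every x in an open interval J ⊆ (0,∞), and set F_x = (I + R_x)⁻¹. Then x ↦ F_x is differentiable on J with dF_x/dx = A·F_x + F_x·A − 2·F_x·A·F_x, and this expression also equals F_x·exp(−xA)·B·C·exp(−xA)·F_x. -/

import Mathlib

open MeasureTheory NormedSpace Set Filter

set_option synthInstance.maxHeartbeats 400000
set_option maxHeartbeats 1000000
set_option linter.unusedSectionVars false

/-- The semigroup `exp(-tA)` generated by a bounded operator `A`. -/
noncomputable def expA {H : Type*} [NormedAddCommGroup H] [InnerProductSpace ℂ H]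
    [CompleteSpace H] (A : H →L[ℂ] H) (t : ℝ) : H →L[ℂ] H :=
  NormedSpace.exp ((-(t : ℂ)) • A)

/-- `R_x = ∫_x^∞ exp(-tA)·BC·exp(-tA) dt` as a Bochner integral. -/
noncomputable def Rop {H : Type*} [NormedAddCommGroup H] [InnerProductSpace ℂ H]
    [CompleteSpace H] (A : H →L[ℂ] H) (BC : H →L[ℂ] H) (x : ℝ) : H →L[ℂ] H :=
  ∫ t in Set.Ioi x, expA A t * BC * expA A t


section Aux

variable {H : Type*} [NormedAddCommGroup H] [InnerProductSpace ℂ H] [CompleteSpace H]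
  (A BC : H →L[ℂ] H)

lemma expA_eq_real (t : ℝ) : expA A t = NormedSpace.exp (t • (-A)) := by
  rw [expA]
  congr 1
  rw [smul_neg, ← neg_smul]
  norm_num [← Complex.coe_smul]

lemma hasDerivAt_expA (t : ℝ) : HasDerivAt (expA A) (-(A * expA A t)) t := by
  have h := hasDerivAt_exp_smul_const' (𝕂 := ℝ) (-A) t
  simp only [← expA_eq_real] at h
  simpa [neg_mul] using h

lemma hasDerivAt_expA' (t : ℝ) : HasDerivAt (expA A) (-(expA A t * A)) t := by
  have h := hasDerivAt_exp_smul_const (𝕂 := ℝ) (-A) t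
  simp only [← expA_eq_real] at h
  simpa [mul_neg] using h

lemma continuous_expA : Continuous (expA A) :=
  continuous_iff_continuousAt.2 fun t => (hasDerivAt_expA A t).continuousAt

lemma continuous_G : Continuous (fun t => expA A t * BC * expA A t) :=
  ((continuous_expA A).mul continuous_const).mul (continuous_expA A)

variable {M ε : ℝ} (hM : 0 < M) (hε : 0 < ε)
  (hdecay : ∀ t : ℝ, 0 ≤ t → ‖expA A t‖ ≤ M * Real.exp (-ε * t))

section
include hε hdecay

lemma norm_G_le {t : ℝ} (ht : 0 ≤ t) :
    ‖expA A t * BC * expA A t‖ ≤ M * M * ‖BC‖ * Real.exp (-(2 * ε) * t) := by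
  have h1 : ‖expA A t‖ ≤ M * Real.exp (-ε * t) := hdecay t ht
  have h2 : Real.exp (-(2 * ε) * t) = Real.exp (-ε * t) * Real.exp (-ε * t) := by
    rw [← Real.exp_add]; ring_nf
  have h3 : (0:ℝ) < Real.exp (-ε * t) := Real.exp_pos _
  calc ‖expA A t * BC * expA A t‖ ≤ ‖expA A t * BC‖ * ‖expA A t‖ := norm_mul_le _ _
    _ ≤ (‖expA A t‖ * ‖BC‖) * ‖expA A t‖ :=
        mul_le_mul_of_nonneg_right (norm_mul_le _ _) (norm_nonneg _)
    _ ≤ M * M * ‖BC‖ * Real.exp (-(2 * ε) * t) := by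
        rw [h2]
        have hM0 : 0 ≤ M * Real.exp (-ε * t) := le_trans (norm_nonneg _) h1
        have key := mul_le_mul h1 h1 (norm_nonneg _) hM0
        nlinarith [mul_le_mul_of_nonneg_left key (norm_nonneg BC)]

lemma integrableOn_G {x : ℝ} (hx : 0 ≤ x) :
    IntegrableOn (fun t => expA A t * BC * expA A t) (Ioi x) := by
  apply Integrable.mono' (g := fun t => M * M * ‖BC‖ * Real.exp (-(2 * ε) * t))
  · exact ((exp_neg_integrableOn_Ioi x (by positivity)).const_mul _)
  · exact (continuous_G A BC).aestronglyMeasurable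
  · filter_upwards [ae_restrict_mem measurableSet_Ioi] with t ht
    exact norm_G_le A BC hε hdecay (hx.trans ht.le)

lemma Rop_split {a b : ℝ} (ha : 0 ≤ a) (hab : a ≤ b) :
    Rop A BC a = (∫ t in a..b, expA A t * BC * expA A t) + Rop A BC b := by
  rw [intervalIntegral.integral_of_le hab, Rop, Rop,
    ← Set.Ioc_union_Ioi_eq_Ioi hab,
    setIntegral_union (Set.Ioc_disjoint_Ioi le_rfl) measurableSet_Ioi
      ((integrableOn_G A BC hε hdecay ha).mono_set Set.Ioc_subset_Ioi_self)
      (integrableOn_G A BC hε hdecay (ha.trans hab))]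

lemma hasDerivAt_Rop {x : ℝ} (hx : 0 < x) :
    HasDerivAt (Rop A BC) (-(expA A x * BC * expA A x)) x := by
  have hev : ∀ᶠ y in nhds x,
      Rop A BC y = Rop A BC x - ∫ t in x..y, expA A t * BC * expA A t := by
    filter_upwards [isOpen_Ioi.mem_nhds hx] with y hy
    rcases le_total x y with h | h
    · have := Rop_split A BC hε hdecay hx.le h
      rw [this]; abel
    · have := Rop_split A BC hε hdecay (le_of_lt hy) h
      rw [this, intervalIntegral.integral_symm]; abel
  have h2 : HasDerivAt (fun y => Rop A BC x - ∫ t in x..y, expA A t * BC * expA A t)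
      (-(expA A x * BC * expA A x)) x := by
    have := intervalIntegral.integral_hasDerivAt_right
      ((continuous_G A BC).intervalIntegrable x x)
      ((continuous_G A BC).stronglyMeasurable.stronglyMeasurableAtFilter)
      (continuous_G A BC).continuousAt
    have h := (hasDerivAt_const x (Rop A BC x)).sub this
    rw [zero_sub] at h
    exact h
  exact h2.congr_of_eventuallyEq hev

end

section
include hε hdecay

lemma tendsto_G_zero : Tendsto (fun t => expA A t * BC * expA A t) atTop (nhds 0) := by
  apply squeeze_zero_norm'
  · filter_upwards [eventually_ge_atTop (0:ℝ)] with t ht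
    exact norm_G_le A BC hε hdecay ht
  · rw [show (0:ℝ) = M * M * ‖BC‖ * 0 by ring]
    apply Tendsto.const_mul
    apply Real.tendsto_exp_atBot.comp
    apply Tendsto.const_mul_atTop_of_neg (by linarith : -(2*ε) < 0) tendsto_id

lemma integrableOn_AG {x : ℝ} (hx : 0 ≤ x) :
    IntegrableOn (fun t => A * (expA A t * BC * expA A t)
      + (expA A t * BC * expA A t) * A) (Ioi x) := by
  have h := integrableOn_G A BC hε hdecay hx
  exact ((ContinuousLinearMap.mul ℂ (H →L[ℂ] H) A).integrable_comp h).add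
    (((ContinuousLinearMap.mul ℂ (H →L[ℂ] H)).flip A).integrable_comp h)

lemma lyapunov {x : ℝ} (hx : 0 < x) :
    A * Rop A BC x + Rop A BC x * A = expA A x * BC * expA A x := by
  set G : ℝ → H →L[ℂ] H := fun t => expA A t * BC * expA A t with hG
  have hderiv : ∀ t : ℝ, HasDerivAt (fun s => -(G s)) (A * G t + G t * A) t := by
    intro t
    have h := (((hasDerivAt_expA A t).mul_const BC).mul (hasDerivAt_expA' A t)).neg
    refine HasDerivAt.congr_deriv h ?_
    noncomm_ring
  have hcont : Continuous (fun t => A * G t + G t * A) :=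
    (continuous_const.mul (continuous_G A BC)).add ((continuous_G A BC).mul continuous_const)
  have key : ∀ T, x ≤ T → (∫ t in x..T, (A * G t + G t * A)) = G x - G T := by
    intro T hT
    rw [intervalIntegral.integral_eq_sub_of_hasDerivAt (fun t _ => hderiv t)
      (hcont.intervalIntegrable x T)]
    abel
  have hlim1 : Tendsto (fun T => ∫ t in x..T, (A * G t + G t * A)) atTop
      (nhds (∫ t in Ioi x, (A * G t + G t * A))) :=
    intervalIntegral_tendsto_integral_Ioi x (integrableOn_AG A BC hε hdecay hx.le) tendsto_id
  have hlim2 : Tendsto (fun T => ∫ t in x..T, (A * G t + G t * A)) atTop (nhds (G x)) := by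
    have : Tendsto (fun T => G x - G T) atTop (nhds (G x)) := by
      simpa using (tendsto_const_nhds (x := G x)).sub (tendsto_G_zero A BC hε hdecay)
    apply this.congr'
    filter_upwards [eventually_ge_atTop x] with T hT
    exact (key T hT).symm
  have hint : (∫ t in Ioi x, (A * G t + G t * A)) = G x := tendsto_nhds_unique hlim1 hlim2
  have hG1 := integrableOn_G A BC hε hdecay hx.le
  have hA1 : A * Rop A BC x = ∫ t in Ioi x, A * G t := by
    have h := ContinuousLinearMap.integral_comp_comm
      (ContinuousLinearMap.mul ℂ (H →L[ℂ] H) A) hG1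
    simp only [ContinuousLinearMap.mul_apply'] at h
    rw [Rop]; exact h.symm
  have hA2 : Rop A BC x * A = ∫ t in Ioi x, G t * A := by
    have h := ContinuousLinearMap.integral_comp_comm
      ((ContinuousLinearMap.mul ℂ (H →L[ℂ] H)).flip A) hG1
    simp only [ContinuousLinearMap.flip_apply, ContinuousLinearMap.mul_apply'] at h
    rw [Rop]; exact h.symm
  have hadd := integral_add ((ContinuousLinearMap.mul ℂ (H →L[ℂ] H) A).integrable_comp hG1)
    (((ContinuousLinearMap.mul ℂ (H →L[ℂ] H)).flip A).integrable_comp hG1)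
  simp only [ContinuousLinearMap.flip_apply, ContinuousLinearMap.mul_apply'] at hadd
  rw [hA1, hA2, ← hadd, hint]

end

end Aux

/-- If `I + R_x` is invertible for every `x` in an open interval `J ⊆ (0,∞)` and
`F_x = (I + R_x)⁻¹`, then `x ↦ F_x` is differentiable on `J` with
`dF_x/dx = A·F_x + F_x·A − 2·F_x·A·F_x`, and this expression equals
`F_x·exp(−xA)·B·C·exp(−xA)·F_x`. -/
theorem hasDerivAt_resolvent_of_lyapunov
    {H H₀ : Type*} [NormedAddCommGroup H] [InnerProductSpace ℂ H] [CompleteSpace H]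
    [NormedAddCommGroup H₀] [InnerProductSpace ℂ H₀] [CompleteSpace H₀]
    (A : H →L[ℂ] H) (B : H₀ →L[ℂ] H) (C : H →L[ℂ] H₀)
    (M ε : ℝ) (hM : 0 < M) (hε : 0 < ε)
    (hdecay : ∀ t : ℝ, 0 ≤ t → ‖expA A t‖ ≤ M * Real.exp (-ε * t))
    (J : Set ℝ) (hJopen : IsOpen J) (hJsub : J ⊆ Set.Ioi (0 : ℝ))
    (hinv : ∀ x ∈ J, IsUnit (1 + Rop A (B ∘L C) x))
    (F : ℝ → H →L[ℂ] H)
    (hF : ∀ x ∈ J, F x = Ring.inverse (1 + Rop A (B ∘L C) x)) :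
    ∀ x ∈ J,
      HasDerivAt F (A * F x + F x * A - (2 : ℂ) • (F x * A * F x)) x ∧
      A * F x + F x * A - (2 : ℂ) • (F x * A * F x)
        = F x * (expA A x * (B ∘L C) * expA A x) * F x := by
  intro x hx
  have hx0 : 0 < x := hJsub hx
  set BC := B ∘L C with hBC
  set R := Rop A BC x with hR
  set G : H →L[ℂ] H := expA A x * BC * expA A x with hGdef
  -- the unit
  set u : (H →L[ℂ] H)ˣ := (hinv x hx).unit with hu
  have huval : (u : H →L[ℂ] H) = 1 + R := (hinv x hx).unit_spec
  have hFx : F x = ↑u⁻¹ := by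
    rw [hF x hx, ← huval, Ring.inverse_unit]
  -- Lyapunov
  have hlyap : A * R + R * A = G := lyapunov A BC hε hdecay hx0
  -- cancellation
  have hc1 : (1 + R) * F x = 1 := by
    rw [hFx, ← huval]; exact u.mul_inv
  have hc2 : F x * (1 + R) = 1 := by
    rw [hFx, ← huval]; exact u.inv_mul
  have hRF : R * F x = 1 - F x := by
    have := hc1; rw [add_mul, one_mul] at this; linear_combination (norm := noncomm_ring) this
  have hFR : F x * R = 1 - F x := by
    have := hc2; rw [mul_add, mul_one] at this; linear_combination (norm := noncomm_ring) this
  -- the key algebraic identity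
  have heq : A * F x + F x * A - (2 : ℂ) • (F x * A * F x) = F x * G * F x := by
    rw [← hlyap]
    have expand : F x * (A * R + R * A) * F x
        = F x * A * (R * F x) + (F x * R) * (A * F x) := by noncomm_ring
    rw [expand, hRF, hFR, two_smul ℂ]
    noncomm_ring
  -- derivative
  have hRd : HasDerivAt (Rop A BC) (-G) x := hasDerivAt_Rop A BC hε hdecay hx0
  have h1plus : HasDerivAt (fun y => 1 + Rop A BC y) (-G) x := by
    have h := (hasDerivAt_const x (1 : H →L[ℂ] H)).add hRd
    rw [zero_add] at h
    exact h
  have hinvd := hasFDerivAt_ringInverse (𝕜 := ℂ) u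
  rw [huval] at hinvd
  have hcomp := (hinvd.restrictScalars ℝ).comp_hasDerivAt x h1plus
  have hFd : HasDerivAt F (F x * G * F x) x := by
    have hval : ((-(ContinuousLinearMap.mulLeftRight ℂ (H →L[ℂ] H) ↑u⁻¹ ↑u⁻¹)).restrictScalars ℝ)
        (-G) = F x * G * F x := by
      simp [ContinuousLinearMap.mulLeftRight_apply, hFx, mul_assoc]
    rw [hval] at hcomp
    apply hcomp.congr_of_eventuallyEq
    filter_upwards [hJopen.mem_nhds hx] with y hy
    exact hF y hy
  exact ⟨heq ▸ hFd, heq⟩
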